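/- Let A_1,...,A_m ∈ H^n and d ∈ N. If {A_1,...,A_m} is d-RSDC, then the set {A_i ⊕ 0_d : i ∈ [m]} ⊆ H^{n+d} is ASDC. (Specifically, if Ã_i ∈ H^{n+d} are SDC matrices whose top-left n×n principal submatrices are the A_i, then conjugating by P_ε = diag(I_n, √ε I_d) produces SDC Hermitian matrices converging to A_i ⊕ 0_d as ε → 0.) -/

import Mathlib

open Matrix
open scoped Matrix.Norms.L2Operator

/-- If `{A_1, ..., A_m} ⊆ H^n` is `d`-RSDC, then `{A_i ⊕ 0_d} ⊆ H^{n+d}` is ASDC. -/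
theorem rsdc_imp_padded_asdc
    {n m d : ℕ} (A : Fin m → Matrix (Fin n) (Fin n) ℂ)
    (hherm : ∀ i, (A i).IsHermitian)
    (hRSDC : ∃ At : Fin m → Matrix (Fin n ⊕ Fin d) (Fin n ⊕ Fin d) ℂ,
      (∀ i, (At i).IsHermitian) ∧
      (∀ i, ∀ a b : Fin n, At i (Sum.inl a) (Sum.inl b) = A i a b) ∧
      ∃ P : Matrix (Fin n ⊕ Fin d) (Fin n ⊕ Fin d) ℂ, IsUnit P ∧
        ∀ i, (Pᴴ * At i * P).IsDiag) :
    ∀ ε > (0 : ℝ), ∃ Bt : Fin m → Matrix (Fin n ⊕ Fin d) (Fin n ⊕ Fin d) ℂ,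
      (∀ i, (Bt i).IsHermitian) ∧
      (∀ i, ‖Matrix.fromBlocks (A i) 0 0 (0 : Matrix (Fin d) (Fin d) ℂ) - Bt i‖ ≤ ε) ∧
      ∃ P : Matrix (Fin n ⊕ Fin d) (Fin n ⊕ Fin d) ℂ, IsUnit P ∧
        ∀ i, (Pᴴ * Bt i * P).IsDiag := by
  obtain ⟨At, hAtH, hAtblock, P, hP, hPdiag⟩ := hRSDC
  intro ε hε
  -- the scaling matrices
  set Q : ℝ → Matrix (Fin n ⊕ Fin d) (Fin n ⊕ Fin d) ℂ :=
    fun δ => Matrix.fromBlocks 1 0 0 ((δ : ℂ) • 1) with hQdef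
  have hQsum : Q = fun δ : ℝ =>
      Matrix.fromBlocks 1 0 0 0 + (δ : ℂ) • Matrix.fromBlocks 0 0 0 (1 : Matrix (Fin d) (Fin d) ℂ) := by
    funext δ
    rw [hQdef]
    simp only [Matrix.fromBlocks_smul, smul_zero]
    rw [Matrix.fromBlocks_add]
    norm_num
  have hQcont : Continuous Q := by
    rw [hQsum]
    exact continuous_const.add (Complex.continuous_ofReal.smul continuous_const)
  have hQH : ∀ δ, (Q δ)ᴴ = Q δ := by
    intro δ
    simp [hQdef, Matrix.fromBlocks_conjTranspose, Matrix.conjTranspose_smul,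
      Complex.star_def, Complex.conj_ofReal]
  have hQ0 : ∀ i, Q 0 * At i * Q 0 =
      Matrix.fromBlocks (A i) 0 0 (0 : Matrix (Fin d) (Fin d) ℂ) := by
    intro i
    have hA11 : (At i).toBlocks₁₁ = A i := by
      funext a b; exact hAtblock i a b
    conv_lhs => rw [← Matrix.fromBlocks_toBlocks (At i)]
    simp [hQdef, Matrix.fromBlocks_multiply, hA11]
  -- continuity argument: choose δ > 0 small enough
  have hcont : ∀ i : Fin m, ∀ᶠ δ in nhds (0 : ℝ),
      ‖Matrix.fromBlocks (A i) 0 0 (0 : Matrix (Fin d) (Fin d) ℂ) - Q δ * At i * Q δ‖ ≤ ε := by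
    intro i
    have hc : ContinuousAt (fun δ : ℝ =>
        ‖Matrix.fromBlocks (A i) 0 0 (0 : Matrix (Fin d) (Fin d) ℂ) - Q δ * At i * Q δ‖) 0 := by
      exact ((continuous_const.sub ((hQcont.mul continuous_const).mul hQcont)).norm).continuousAt
    have h0 : (fun δ : ℝ =>
        ‖Matrix.fromBlocks (A i) 0 0 (0 : Matrix (Fin d) (Fin d) ℂ) - Q δ * At i * Q δ‖) 0 = 0 := by
      simp only [hQ0 i]; simp
    have ht : Filter.Tendsto (fun δ : ℝ =>
        ‖Matrix.fromBlocks (A i) 0 0 (0 : Matrix (Fin d) (Fin d) ℂ) - Q δ * At i * Q δ‖)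
        (nhds 0) (nhds 0) := by
      simpa [h0] using hc.tendsto
    exact (ht.eventually_lt_const hε).mono fun δ hδ => le_of_lt hδ
  have hall : ∀ᶠ δ in nhds (0 : ℝ), ∀ i : Fin m,
      ‖Matrix.fromBlocks (A i) 0 0 (0 : Matrix (Fin d) (Fin d) ℂ) - Q δ * At i * Q δ‖ ≤ ε :=
    Filter.eventually_all.2 hcont
  obtain ⟨r, hr, hball⟩ := Metric.eventually_nhds_iff.mp hall
  set δ : ℝ := r / 2 with hδdef
  have hδpos : 0 < δ := by positivity
  have hδball : dist δ (0 : ℝ) < r := by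
    rw [Real.dist_eq, sub_zero, abs_of_pos hδpos]
    linarith
  have hbound := hball hδball
  -- Q δ is invertible
  have hQunit : IsUnit (Q δ) := by
    rw [Matrix.isUnit_iff_isUnit_det]
    have : (Q δ).det = ((δ : ℂ)) ^ d := by
      simp [hQdef, Matrix.det_fromBlocks_zero₂₁, Matrix.det_smul]
    rw [this]
    exact isUnit_iff_ne_zero.2 (pow_ne_zero d (Complex.ofReal_ne_zero.2 hδpos.ne'))
  refine ⟨fun i => Q δ * At i * Q δ, ?_, ?_, (Q δ)⁻¹ * P, ?_, ?_⟩
  · intro i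
    have := Matrix.isHermitian_conjTranspose_mul_mul (Q δ) (hAtH i)
    rwa [hQH δ] at this
  · exact hbound
  · exact (Matrix.isUnit_nonsing_inv_iff.mpr hQunit).mul hP
  · intro i
    have hQdet : IsUnit (Q δ).det := (Matrix.isUnit_iff_isUnit_det _).mp hQunit
    have key : ((Q δ)⁻¹ * P)ᴴ * (Q δ * At i * Q δ) * ((Q δ)⁻¹ * P) = Pᴴ * At i * P := by
      rw [Matrix.conjTranspose_mul, Matrix.conjTranspose_nonsing_inv, hQH δ]
      rw [show Pᴴ * (Q δ)⁻¹ * (Q δ * At i * Q δ) * ((Q δ)⁻¹ * P)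
          = Pᴴ * (((Q δ)⁻¹ * Q δ) * At i * (Q δ * (Q δ)⁻¹)) * P by
        simp only [Matrix.mul_assoc]]
      rw [Matrix.nonsing_inv_mul _ hQdet, Matrix.mul_nonsing_inv _ hQdet]
      simp
    rw [key]
    exact hPdiag i
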